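/- arXiv:2403.01159 — 2 statements merged into one kernel-verified Lean document; each statement's English description precedes it below -/
import Mathlib

section
/- The part of the pentablock's distinguished boundary lying on the variety {s² = 4p} equals the orbit of (0,2,1) under Aut(𝔓): {(a,s,p) : |a|²+|s|²/4 = 1, (s,p) ∈ bΓ₂, s² = 4p} = { f_{ωv}(0,2,1) : ω ∈ 𝕋, v ∈ Aut(𝔻) } = {(0, 2z, z²) : z ∈ 𝕋}. -/
open Complex

/-- Möbius automorphism of the unit disc. -/
noncomputable def discAut (η α z : ℂ) : ℂ := η * (z - α) / (starRingEnd ℂ α * z - 1)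

lemma discAut_one_abs (η α : ℂ) (hη : ‖η‖ = 1) (hα : ‖α‖ < 1) :
    ‖discAut η α 1‖ = 1 := by
  have h1 : (1 : ℂ) - α ≠ 0 := by
    intro h
    have : α = 1 := by linear_combination -h
    simp [this] at hα
  have h2 : starRingEnd ℂ α * 1 - 1 = -(starRingEnd ℂ ((1 : ℂ) - α)) := by
    rw [map_sub, map_one]; ring
  unfold discAut
  rw [h2, norm_div, norm_mul, hη, norm_neg, Complex.norm_conj, one_mul]
  exact div_self (norm_ne_zero_iff.mpr h1)

lemma royal_eq_circle :
    {x : ℂ × ℂ × ℂ |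
        (‖x.1‖ ^ 2 + ‖x.2.1‖ ^ 2 / 4 = 1 ∧
          (∃ z₁ z₂ : ℂ, ‖z₁‖ = 1 ∧ ‖z₂‖ = 1 ∧
            x.2.1 = z₁ + z₂ ∧ x.2.2 = z₁ * z₂)) ∧ x.2.1 ^ 2 = 4 * x.2.2} =
      {x : ℂ × ℂ × ℂ | ∃ z : ℂ, ‖z‖ = 1 ∧ x = (0, 2 * z, z ^ 2)} := by
  ext ⟨a, s, p⟩
  simp only [Set.mem_setOf_eq]
  constructor
  · rintro ⟨⟨hnorm, z₁, z₂, hz1, hz2, hs, hp⟩, hsq⟩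
    have heq : z₁ = z₂ := by
      have : (z₁ - z₂) ^ 2 = 0 := by
        have := hsq
        rw [hs, hp] at this
        linear_combination this
      have := pow_eq_zero_iff (n := 2) (by norm_num) |>.1 this
      linear_combination this
    subst heq hs hp
    have habs_s : ‖z₁ + z₁‖ = 2 := by
      have : z₁ + z₁ = 2 * z₁ := by ring
      rw [this, norm_mul, hz1]
      simp
    rw [habs_s] at hnorm
    have ha : ‖a‖ = 0 := by nlinarith [norm_nonneg a]
    refine ⟨z₁, hz1, ?_⟩
    have : a = 0 := by simpa using ha
    subst this
    refine Prod.ext rfl (Prod.ext (by ring) (by ring))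
  · rintro ⟨z, hz, h⟩
    simp only [Prod.mk.injEq] at h
    obtain ⟨rfl, rfl, rfl⟩ := h
    refine ⟨⟨?_, z, z, hz, hz, by ring, by ring⟩, by ring⟩
    simp [map_mul, hz]
    norm_num

/-- The part of the pentablock's distinguished boundary on the variety `s² = 4p` equals
the orbit of `(0,2,1)` under `Aut(𝔓)` (noting `f_{ωv}(0,2,1) = (0, 2v(1), v(1)²)`),
which is `{(0, 2z, z²) : z ∈ 𝕋}`. -/
theorem pentablock_boundary_royal_eq_orbit :
    {x : ℂ × ℂ × ℂ |
        (‖x.1‖ ^ 2 + ‖x.2.1‖ ^ 2 / 4 = 1 ∧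
          (∃ z₁ z₂ : ℂ, ‖z₁‖ = 1 ∧ ‖z₂‖ = 1 ∧
            x.2.1 = z₁ + z₂ ∧ x.2.2 = z₁ * z₂)) ∧ x.2.1 ^ 2 = 4 * x.2.2} =
      {x : ℂ × ℂ × ℂ | ∃ ω η α : ℂ, ‖ω‖ = 1 ∧ ‖η‖ = 1 ∧
          ‖α‖ < 1 ∧
          x = (0, 2 * discAut η α 1, (discAut η α 1) ^ 2)} ∧
    {x : ℂ × ℂ × ℂ |
        (‖x.1‖ ^ 2 + ‖x.2.1‖ ^ 2 / 4 = 1 ∧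
          (∃ z₁ z₂ : ℂ, ‖z₁‖ = 1 ∧ ‖z₂‖ = 1 ∧
            x.2.1 = z₁ + z₂ ∧ x.2.2 = z₁ * z₂)) ∧ x.2.1 ^ 2 = 4 * x.2.2} =
      {x : ℂ × ℂ × ℂ | ∃ z : ℂ, ‖z‖ = 1 ∧ x = (0, 2 * z, z ^ 2)} := by
  refine ⟨?_, royal_eq_circle⟩
  rw [royal_eq_circle]
  ext x
  simp only [Set.mem_setOf_eq]
  constructor
  · rintro ⟨z, hz, rfl⟩
    refine ⟨1, -z, 0, by simp, by simpa using hz, by simp, ?_⟩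
    have : discAut (-z) 0 1 = z := by unfold discAut; simp
    rw [this]
  · rintro ⟨ω, η, α, hω, hη, hα, rfl⟩
    exact ⟨discAut η α 1, discAut_one_abs η α hη hα, rfl⟩
end

section
/- The distinguished boundary of the pentablock equals the union of the orbits of (1,0,1) and (0,2,1) under its automorphism group: b𝔓̄ = { f_{ωv}(1,0,1) : ω ∈ 𝕋, v ∈ Aut(𝔻) } ∪ { f_{ωv}(0,2,1) : ω ∈ 𝕋, v ∈ Aut(𝔻) }. -/
open Complex

lemma denom_ne_zero {α z : ℂ} (hα : ‖α‖ < 1) (hz : ‖z‖ = 1) :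
    starRingEnd ℂ α * z - 1 ≠ 0 := by
  intro h
  rw [sub_eq_zero] at h
  have h2 : ‖(starRingEnd ℂ α * z)‖ = ‖α‖ := by
    simp [norm_mul, hz]
  rw [h] at h2
  simp at h2
  linarith

lemma abs_denom {α z : ℂ} (hz : ‖z‖ = 1) :
    ‖(starRingEnd ℂ α * z - 1)‖ = ‖(z - α)‖ := by
  have h1 : z * starRingEnd ℂ z = 1 := by
    rw [Complex.mul_conj, Complex.normSq_eq_norm_sq, hz]; norm_num
  have h2 : starRingEnd ℂ α * z - 1 = z * (starRingEnd ℂ α - starRingEnd ℂ z) := by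
    rw [mul_sub, h1]; ring
  rw [h2, norm_mul, hz, one_mul, ← map_sub (starRingEnd ℂ), Complex.norm_conj,
    ← neg_sub, norm_neg]

lemma abs_discAut_one {η α z : ℂ} (hη : ‖η‖ = 1) (hα : ‖α‖ < 1)
    (hz : ‖z‖ = 1) : ‖(discAut η α z)‖ = 1 := by
  have hd := abs_denom (α := α) hz
  have hne : ‖(z - α)‖ ≠ 0 := by
    rw [← hd]; exact norm_ne_zero_iff.2 (denom_ne_zero hα hz)
  rw [discAut, norm_div, norm_mul, hη, one_mul, hd]
  field_simp

lemma orbit1_norm {ω η α : ℂ} (hω : ‖ω‖ = 1) (hη : ‖η‖ = 1)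
    (hα : ‖α‖ < 1) :
    ‖(ω * η * (1 - (‖α‖ : ℂ) ^ 2) / (1 + (starRingEnd ℂ α) ^ 2))‖ ^ 2
      + ‖(discAut η α Complex.I + discAut η α (-Complex.I))‖ ^ 2 / 4 = 1 := by
  have hD1 : starRingEnd ℂ α * Complex.I - 1 ≠ 0 := denom_ne_zero hα (by simp)
  have hD2 : starRingEnd ℂ α * (-Complex.I) - 1 ≠ 0 := denom_ne_zero hα (by simp)
  have hprod : (starRingEnd ℂ α * Complex.I - 1) * (starRingEnd ℂ α * (-Complex.I) - 1)
      = 1 + (starRingEnd ℂ α)^2 := by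
    linear_combination (-(starRingEnd ℂ α)^2) * Complex.I_sq
  have hN : (1 : ℂ) + (starRingEnd ℂ α)^2 ≠ 0 := hprod ▸ mul_ne_zero hD1 hD2
  have key : discAut η α Complex.I + discAut η α (-Complex.I)
      = 2 * η * (α + starRingEnd ℂ α) / (1 + (starRingEnd ℂ α)^2) := by
    rw [discAut, discAut, div_add_div _ _ hD1 hD2, div_eq_div_iff (mul_ne_zero hD1 hD2) hN]
    linear_combination (2*η*(starRingEnd ℂ α)*(α*starRingEnd ℂ α - 1)) * Complex.I_sq
  rw [key, Complex.add_conj]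
  set r := α.re with hr
  set m := α.im with hm
  have hA2 : (‖α‖)^2 = r^2 + m^2 := by
    rw [Complex.sq_norm, Complex.normSq_apply]; ring
  have hn2 : ‖(1 + (starRingEnd ℂ α)^2)‖ ^ 2 = (1 + r^2 - m^2)^2 + (2*r*m)^2 := by
    rw [Complex.sq_norm, Complex.normSq_apply]
    simp [pow_two, Complex.add_re, Complex.add_im, Complex.mul_re, Complex.mul_im]
    ring
  have hnpos : 0 < ‖(1 + (starRingEnd ℂ α)^2)‖ :=
    norm_pos_iff.2 hN
  have ha1 : ‖(ω * η * (1 - (‖α‖ : ℂ) ^ 2))‖ = 1 - (‖α‖)^2 := by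
    rw [norm_mul, norm_mul, hω, hη]
    have h1 : (1:ℂ) - (‖α‖:ℂ)^2 = ((1 - (‖α‖)^2 : ℝ):ℂ) := by push_cast; ring
    rw [h1, Complex.norm_real, Real.norm_eq_abs]
    rw [one_mul, one_mul]
    exact _root_.abs_of_nonneg (by nlinarith [norm_nonneg α])
  have hs1 : ‖(2 * η * ((2*r : ℝ):ℂ))‖ = 2 * |2*r| := by
    rw [norm_mul, norm_mul, hη, Complex.norm_real, Real.norm_eq_abs]
    simp
  rw [norm_div, norm_div, ha1, hs1]
  rw [div_pow, div_pow, hn2]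
  have hA1 : r^2 + m^2 < 1 := by nlinarith [norm_nonneg α, hA2]
  have hd : (1 + r^2 - m^2)^2 + (2*r*m)^2 > 0 := by nlinarith
  field_simp
  rw [hA2]
  rw [div_eq_iff (ne_of_gt (by nlinarith [hd])), _root_.sq_abs]; ring
lemma exists_params {z₁ z₂ : ℂ} (h1 : ‖z₁‖ = 1) (h2 : ‖z₂‖ = 1)
    (hne : z₁ ≠ z₂) :
    ∃ t : ℝ, ∃ η : ℂ, |t| < 1 ∧ ‖η‖ = 1 ∧
      discAut η (t : ℂ) Complex.I = z₁ ∧ discAut η (t : ℂ) (-Complex.I) = z₂ ∧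
      ∃ y : ℝ, y < 0 ∧ ‖(z₁ + z₂)‖ ^ 2 = 4 * (1 - y ^ 2) ∧
        1 - t ^ 2 = -y * (1 + t ^ 2) := by
  have hz10 : z₁ ≠ 0 := by intro h; simp [h] at h1
  have hz20 : z₂ ≠ 0 := by intro h; simp [h] at h2
  set q : ℂ := z₁ / z₂ with hqdef
  have hqabs : ‖q‖ = 1 := by rw [hqdef, norm_div, h1, h2]; norm_num
  have hq1 : q ≠ 1 := by
    intro h
    rw [hqdef, div_eq_one_iff_eq hz20] at h
    exact hne h
  obtain ⟨w₀, hw₀⟩ := IsAlgClosed.exists_pow_nat_eq q (n := 2) (by norm_num)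
  have him : w₀.im ≠ 0 := by
    intro h
    have hq : q = ((w₀.re ^ 2 : ℝ) : ℂ) := by
      rw [← hw₀]
      apply Complex.ext <;> simp [pow_two, Complex.mul_re, Complex.mul_im, h]
    rw [hq, Complex.norm_real, Real.norm_eq_abs, _root_.abs_of_nonneg (by positivity)] at hqabs
    exact hq1 (by rw [hq, hqabs]; norm_num)
  obtain ⟨w, hw2, hwim⟩ : ∃ w : ℂ, w ^ 2 = q ∧ w.im < 0 := by
    rcases lt_or_gt_of_ne him with h | h
    · exact ⟨w₀, hw₀, h⟩
    · refine ⟨-w₀, by rw [neg_pow]; simpa using hw₀, by simpa using h⟩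
  have hw0 : w ≠ 0 := by
    intro h
    rw [h] at hw2
    rw [← hw2] at hqabs
    simp at hqabs
  have habsw : ‖w‖ = 1 := by
    have h := congrArg norm hw2
    rw [norm_pow, hqabs] at h
    nlinarith [norm_nonneg w]
  set x : ℝ := w.re with hx
  set y : ℝ := w.im with hy
  have hxy : x ^ 2 + y ^ 2 = 1 := by
    have := Complex.sq_norm w
    rw [habsw, Complex.normSq_apply] at this
    nlinarith
  have h1y : (0:ℝ) < 1 - y := by linarith
  set t : ℝ := x / (1 - y) with ht
  have htx : t * (1 - y) = x := by rw [ht, div_mul_cancel₀ _ (ne_of_gt h1y)]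
  have htx2 : t * x = 1 + y := by
    rw [ht]; field_simp; nlinarith
  have ht2 : t ^ 2 < 1 := by nlinarith
  have ht1 : |t| < 1 := abs_lt.2 ⟨by nlinarith, by nlinarith⟩
  have hαabs : ‖((t:ℂ))‖ < 1 := by rwa [Complex.norm_real, Real.norm_eq_abs]
  set η : ℂ := z₁ / w with hηdef
  have hη0 : η ≠ 0 := div_ne_zero hz10 hw0
  have hηabs : ‖η‖ = 1 := by rw [hηdef, norm_div, h1, habsw]; norm_num
  -- key complex identity
  have hkey : Complex.I - (t:ℂ) = w * ((t:ℂ) * Complex.I - 1) := by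
    apply Complex.ext <;>
      simp [Complex.mul_re, Complex.mul_im, Complex.sub_re, Complex.sub_im] <;>
      linarith [htx, htx2]
  have hkey2 : w * (-Complex.I - (t:ℂ)) = -(t:ℂ) * Complex.I - 1 := by
    linear_combination (-Complex.I) * hkey + (1 - w * (t:ℂ)) * Complex.I_sq
  have hz12 : z₁ = w ^ 2 * z₂ := by rw [hw2, hqdef]; field_simp
  have hD1 : starRingEnd ℂ (t:ℂ) * Complex.I - 1 ≠ 0 := denom_ne_zero hαabs (by simp)
  have hD2 : starRingEnd ℂ (t:ℂ) * (-Complex.I) - 1 ≠ 0 := denom_ne_zero hαabs (by simp)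
  have key1 : discAut η (t:ℂ) Complex.I = z₁ := by
    rw [discAut, div_eq_iff hD1, Complex.conj_ofReal, hηdef, div_mul_eq_mul_div,
      div_eq_iff hw0]
    linear_combination z₁ * hkey
  have key2 : discAut η (t:ℂ) (-Complex.I) = z₂ := by
    rw [discAut, div_eq_iff hD2, Complex.conj_ofReal, hηdef, div_mul_eq_mul_div,
      div_eq_iff hw0]
    linear_combination (-Complex.I - (t:ℂ)) * hz12 + z₂ * w * hkey2
  refine ⟨t, η, ht1, hηabs, key1, key2, y, hwim, ?_, ?_⟩
  · have hwconj : w * starRingEnd ℂ w = 1 := by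
      rw [Complex.mul_conj, Complex.normSq_eq_norm_sq, habsw]; norm_num
    have hz1' : z₁ = η * w := by rw [hηdef]; field_simp
    have hz2 : z₂ = η * starRingEnd ℂ w := by
      rw [hηdef, div_mul_eq_mul_div, eq_div_iff hw0]
      linear_combination (-(starRingEnd ℂ w)) * hz12 + (-(z₂ * w)) * hwconj
    have hsum : z₁ + z₂ = η * ((2 * x : ℝ) : ℂ) := by
      rw [hz1', hz2, ← mul_add, Complex.add_conj]
    rw [hsum, norm_mul, hηabs, one_mul, Complex.norm_real, Real.norm_eq_abs]
    nlinarith [hxy, _root_.sq_abs (2 * x)]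
  · nlinarith [htx, htx2, hxy]

/-- The distinguished boundary of the pentablock is the union of the orbits of
`(1,0,1)` and `(0,2,1)` under its automorphism group `{f_{ωv}}`, where
`f_{ωv}(1,0,1) = (ωη(1-|α|²)/(1+ᾱ²), v(i)+v(-i), v(i)v(-i))` and
`f_{ωv}(0,2,1) = (0, 2v(1), v(1)²)` for `v = ηB_α`. -/
theorem pentablock_boundary_eq_union_of_orbits :
    {x : ℂ × ℂ × ℂ | ‖x.1‖ ^ 2 + ‖x.2.1‖ ^ 2 / 4 = 1 ∧
        ∃ z₁ z₂ : ℂ, ‖z₁‖ = 1 ∧ ‖z₂‖ = 1 ∧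
          x.2.1 = z₁ + z₂ ∧ x.2.2 = z₁ * z₂} =
      {x : ℂ × ℂ × ℂ | ∃ ω η α : ℂ, ‖ω‖ = 1 ∧ ‖η‖ = 1 ∧
          ‖α‖ < 1 ∧
          x = (ω * η * (1 - (‖α‖ : ℂ) ^ 2) / (1 + (starRingEnd ℂ α) ^ 2),
            discAut η α Complex.I + discAut η α (-Complex.I),
            discAut η α Complex.I * discAut η α (-Complex.I))} ∪
      {x : ℂ × ℂ × ℂ | ∃ ω η α : ℂ, ‖ω‖ = 1 ∧ ‖η‖ = 1 ∧
          ‖α‖ < 1 ∧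
          x = (0, 2 * discAut η α 1, (discAut η α 1) ^ 2)} := by
  ext x
  obtain ⟨a, s, p⟩ := x
  simp only [Set.mem_setOf_eq, Set.mem_union]
  constructor
  · rintro ⟨habs, z₁, z₂, h1, h2, hs, hp⟩
    by_cases ha : a = 0
    · right
      have hs2 : ‖s‖ ^ 2 = 4 := by
        rw [ha] at habs; simp at habs; linarith
      have heq : z₁ = z₂ := by
        have hre : (z₁ * starRingEnd ℂ z₂).re = 1 := by
          have hns : Complex.normSq (z₁ + z₂) = 4 := by
            rw [← Complex.sq_norm, ← hs, hs2]
          rw [Complex.normSq_add, Complex.normSq_eq_norm_sq, Complex.normSq_eq_norm_sq, h1, h2] at hns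
          norm_num at hns
          simp only [Complex.mul_re, Complex.conj_re, Complex.conj_im]
          linarith
        have habs12 : ‖(z₁ * starRingEnd ℂ z₂)‖ = 1 := by
          rw [norm_mul, Complex.norm_conj, h1, h2]; norm_num
        have him : (z₁ * starRingEnd ℂ z₂).im = 0 := by
          have := Complex.sq_norm (z₁ * starRingEnd ℂ z₂)
          rw [habs12, Complex.normSq_apply, hre] at this
          nlinarith
        have hone : z₁ * starRingEnd ℂ z₂ = 1 := by
          apply Complex.ext <;> simp [hre, him]
        have hzc : z₂ * starRingEnd ℂ z₂ = 1 := by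
          rw [Complex.mul_conj, Complex.normSq_eq_norm_sq, h2]; norm_num
        have hz20 : z₂ ≠ 0 := by intro h; simp [h] at h2
        have hc0 : starRingEnd ℂ z₂ ≠ 0 := by
          intro h; rw [h, mul_zero] at hone; exact one_ne_zero hone.symm
        field_simp at hone hzc
        rw [← hzc] at hone
        exact mul_right_cancel₀ hc0 (hone.trans (mul_comm _ _))
      refine ⟨1, -z₁, 0, by simp, by rw [norm_neg, h1], by norm_num, ?_⟩
      have hd : discAut (-z₁) 0 1 = z₁ := by
        simp [discAut]
      rw [hd]
      simp only [Prod.mk.injEq]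
      exact ⟨ha, by rw [hs, ← heq]; ring, by rw [hp, ← heq]; ring⟩
    · left
      have ha0 : 0 < ‖a‖ := norm_pos_iff.2 ha
      have hslt : ‖s‖ ^ 2 < 4 := by nlinarith
      have hne : z₁ ≠ z₂ := by
        intro h
        rw [hs, h, show z₂ + z₂ = 2 * z₂ by ring, norm_mul] at hslt
        rw [h2] at hslt
        norm_num at hslt
      obtain ⟨t, η, ht1, hηabs, key1, key2, y, hy0, hsum2, hty⟩ := exists_params h1 h2 hne
      set α : ℂ := (t:ℂ) with hαdef
      have hαabs : ‖α‖ < 1 := by rwa [hαdef, Complex.norm_real, Real.norm_eq_abs]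
      have ht2 : t^2 < 1 := by
        have := abs_lt.1 ht1; nlinarith
      have haabs : ‖a‖ = -y := by
        have h4 : ‖a‖ ^ 2 = y ^ 2 := by
          rw [hs, hsum2] at habs; linarith
        have h5 : (0:ℝ) ≤ -y := by linarith
        have h6 : ‖a‖ ^ 2 = (-y) ^ 2 := by rw [h4]; ring
        nlinarith [norm_nonneg a, sq_nonneg (‖a‖ + y)]
      have hη0 : η ≠ 0 := by intro h; rw [h] at hηabs; simp at hηabs
      have h1mt : (1:ℂ) - α^2 ≠ 0 := by
        intro h
        rw [sub_eq_zero] at h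
        rw [hαdef] at h
        have : (1:ℝ) = t^2 := by exact_mod_cast h
        linarith
      have h1pt : (1:ℂ) + α^2 ≠ 0 := by
        intro h
        rw [hαdef] at h
        have : (1:ℝ) + t^2 = 0 := by exact_mod_cast h
        nlinarith
      set ω : ℂ := a * (1 + α^2) / (η * (1 - α^2)) with hωdef
      have hωabs : ‖ω‖ = 1 := by
        rw [hωdef, norm_div, norm_mul, norm_mul, hηabs, one_mul, haabs]
        have e1 : (1:ℂ) + α^2 = ((1 + t^2 : ℝ):ℂ) := by push_cast; ring
        have e2 : (1:ℂ) - α^2 = ((1 - t^2 : ℝ):ℂ) := by push_cast; ring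
        rw [e1, e2, Complex.norm_real, Real.norm_eq_abs, Complex.norm_real, Real.norm_eq_abs,
          _root_.abs_of_pos (by nlinarith), _root_.abs_of_pos (by nlinarith)]
        rw [hty, div_self (ne_of_gt (by nlinarith))]
      refine ⟨ω, η, α, hωabs, hηabs, hαabs, ?_⟩
      have hconj : starRingEnd ℂ α = α := Complex.conj_ofReal t
      have habsα : ((‖α‖ : ℝ):ℂ)^2 = α^2 := by
        rw [hαdef, Complex.norm_real, Real.norm_eq_abs]
        norm_cast
        exact _root_.sq_abs t
      simp only [Prod.mk.injEq]
      refine ⟨?_, by rw [key1, key2, hs], by rw [key1, key2, hp]⟩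
      rw [hconj, habsα, hωdef]
      field_simp
  · rintro (⟨ω, η, α, hω, hη, hα, hx⟩ | ⟨ω, η, α, hω, hη, hα, hx⟩)
    · simp only [Prod.mk.injEq] at hx
      obtain ⟨hx1, hx2, hx3⟩ := hx
      subst hx1; subst hx2; subst hx3
      refine ⟨orbit1_norm hω hη hα, discAut η α Complex.I, discAut η α (-Complex.I),
        abs_discAut_one hη hα (by simp), abs_discAut_one hη hα (by simp), rfl, rfl⟩
    · simp only [Prod.mk.injEq] at hx
      obtain ⟨hx1, hx2, hx3⟩ := hx
      subst hx1; subst hx2; subst hx3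
      have hv := abs_discAut_one (z := 1) hη hα (by simp)
      refine ⟨?_, discAut η α 1, discAut η α 1, hv, hv, by ring, by rw [pow_two]⟩
      simp only [norm_mul, hv]
      simp
      norm_num
end
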